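/- For n ≥ 1 and every fixed ρ ∈ ℝ, the function z ↦ J_{m,n}(z,ρ) is real-differentiable on ℂ and its conjugate Wirtinger derivative satisfies ∂/∂z̄ J_{m,n}(z,ρ) = n · J_{m,n−1}(z,ρ) for all z ∈ ℂ. -/

import Mathlib

open MeasureTheory ProbabilityTheory Complex Finset

/-- Itô's complex Hermite polynomial `J_{m,n}(z, ρ)`. -/
noncomputable def complexHermite (m n : ℕ) (z : ℂ) (ρ : ℝ) : ℂ :=
  ∑ k ∈ Finset.range (min m n + 1),
    (-1 : ℂ) ^ k * (Nat.factorial k : ℂ) * (Nat.choose m k : ℂ) * (Nat.choose n k : ℂ) *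
      (ρ : ℂ) ^ k * z ^ (m - k) * (starRingEnd ℂ z) ^ (n - k)

/-- Wirtinger derivative `∂f/∂z = (1/2)(∂f/∂x − i ∂f/∂y)`. -/
noncomputable def wirtingerDeriv (f : ℂ → ℂ) (z : ℂ) : ℂ :=
  (fderiv ℝ f z 1 - Complex.I * fderiv ℝ f z Complex.I) / 2

/-- Conjugate Wirtinger derivative `∂f/∂z̄ = (1/2)(∂f/∂x + i ∂f/∂y)`. -/
noncomputable def wirtingerDerivBar (f : ℂ → ℂ) (z : ℂ) : ℂ :=
  (fderiv ℝ f z 1 + Complex.I * fderiv ℝ f z Complex.I) / 2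


noncomputable def monoDeriv (a b : ℕ) (z : ℂ) : ℂ →L[ℝ] ℂ :=
  z ^ a •
      (((ContinuousLinearMap.smulRight (1 : ℂ →L[ℂ] ℂ)
        ((b : ℂ) * (starRingEnd ℂ z) ^ (b - 1))).restrictScalars ℝ).comp
        (Complex.conjCLE : ℂ →L[ℝ] ℂ)) +
    (starRingEnd ℂ z) ^ b •
      ((ContinuousLinearMap.smulRight (1 : ℂ →L[ℂ] ℂ) ((a : ℂ) * z ^ (a - 1))).restrictScalars ℝ)

lemma mono_hasFDerivAt (a b : ℕ) (z : ℂ) :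
    HasFDerivAt (fun w : ℂ => w ^ a * (starRingEnd ℂ w) ^ b) (monoDeriv a b z) z := by
  have ha : HasFDerivAt (fun w : ℂ => w ^ a)
      ((ContinuousLinearMap.smulRight (1 : ℂ →L[ℂ] ℂ) ((a : ℂ) * z ^ (a - 1))).restrictScalars ℝ)
      z := ((hasDerivAt_pow a z).hasFDerivAt).restrictScalars ℝ
  have hc : HasFDerivAt (fun w : ℂ => starRingEnd ℂ w) (Complex.conjCLE : ℂ →L[ℝ] ℂ) z :=
    Complex.conjCLE.hasFDerivAt
  have hb : HasFDerivAt (fun w : ℂ => (starRingEnd ℂ w) ^ b)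
      (((ContinuousLinearMap.smulRight (1 : ℂ →L[ℂ] ℂ)
        ((b : ℂ) * (starRingEnd ℂ z) ^ (b - 1))).restrictScalars ℝ).comp
        (Complex.conjCLE : ℂ →L[ℝ] ℂ)) z :=
    (((hasDerivAt_pow b (starRingEnd ℂ z)).hasFDerivAt).restrictScalars ℝ).comp z hc
  exact ha.mul hb

lemma monoDeriv_apply (a b : ℕ) (z v : ℂ) :
    monoDeriv a b z v =
      z ^ a * (starRingEnd ℂ v * ((b : ℂ) * (starRingEnd ℂ z) ^ (b - 1))) +
        (starRingEnd ℂ z) ^ b * (v * ((a : ℂ) * z ^ (a - 1))) := by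
  simp [monoDeriv, smul_eq_mul]

lemma monoDeriv_bar (a b : ℕ) (z : ℂ) :
    (monoDeriv a b z 1 + Complex.I * monoDeriv a b z Complex.I) / 2
      = (b : ℂ) * z ^ a * (starRingEnd ℂ z) ^ (b - 1) := by
  simp only [monoDeriv_apply, map_one, Complex.conj_I]
  field_simp
  ring_nf
  simp [Complex.I_sq]
  ring

lemma choose_nat_id (n k : ℕ) (hn : 1 ≤ n) :
    n.choose k * (n - k) = n * (n - 1).choose k := by
  obtain ⟨n', rfl⟩ : ∃ n', n = n' + 1 := ⟨n - 1, by omega⟩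
  simp only [Nat.add_sub_cancel]
  rcases Nat.lt_or_ge k (n' + 1) with h | h
  · calc (n' + 1).choose k * (n' + 1 - k) = (n' + 1).choose (k + 1) * (k + 1) :=
        (Nat.choose_succ_right_eq _ _).symm
      _ = (n' + 1) * n'.choose k := by
        have h2 := Nat.add_one_mul_choose_eq n' k
        exact h2.symm
  · rw [Nat.sub_eq_zero_of_le h, mul_zero,
      Nat.choose_eq_zero_of_lt (show n' < k by omega), mul_zero]

/-- For `n ≥ 1` and fixed `ρ`, `z ↦ J_{m,n}(z,ρ)` is real-differentiable on `ℂ` and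
`∂/∂z̄ J_{m,n}(z,ρ) = n · J_{m,n-1}(z,ρ)`. -/
theorem wirtingerDerivBar_complexHermite (m n : ℕ) (hn : 1 ≤ n) (ρ : ℝ) :
    (∀ z : ℂ, DifferentiableAt ℝ (fun w => complexHermite m n w ρ) z) ∧
    (∀ z : ℂ, wirtingerDerivBar (fun w => complexHermite m n w ρ) z
      = (n : ℂ) * complexHermite m (n - 1) z ρ) := by
  have H : ∀ z : ℂ, HasFDerivAt (fun w => complexHermite m n w ρ)
      (∑ k ∈ Finset.range (min m n + 1),
        ((-1 : ℂ) ^ k * (Nat.factorial k : ℂ) * (Nat.choose m k : ℂ) * (Nat.choose n k : ℂ) *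
          (ρ : ℂ) ^ k) • monoDeriv (m - k) (n - k) z) z := by
    intro z
    have := HasFDerivAt.sum (x := z)
      (A := fun k (w : ℂ) =>
        (-1 : ℂ) ^ k * (Nat.factorial k : ℂ) * (Nat.choose m k : ℂ) * (Nat.choose n k : ℂ) *
          (ρ : ℂ) ^ k * w ^ (m - k) * (starRingEnd ℂ w) ^ (n - k))
      (A' := fun k =>
        ((-1 : ℂ) ^ k * (Nat.factorial k : ℂ) * (Nat.choose m k : ℂ) * (Nat.choose n k : ℂ) *
          (ρ : ℂ) ^ k) • monoDeriv (m - k) (n - k) z)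
      (u := Finset.range (min m n + 1))
      (fun k _ => by
        have h := (mono_hasFDerivAt (m - k) (n - k) z).const_smul
          ((-1 : ℂ) ^ k * (Nat.factorial k : ℂ) * (Nat.choose m k : ℂ) * (Nat.choose n k : ℂ) *
            (ρ : ℂ) ^ k)
        simpa [Pi.smul_def, smul_eq_mul, mul_assoc] using h)
    simpa [complexHermite, Finset.sum_fn] using this
  constructor
  · exact fun z => (H z).differentiableAt
  · intro z
    have hf := (H z).fderiv
    rw [wirtingerDerivBar, hf]
    simp only [ContinuousLinearMap.sum_apply, ContinuousLinearMap.smul_apply, smul_eq_mul]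
    rw [Finset.mul_sum, ← Finset.sum_add_distrib, Finset.sum_div]
    have hterm : ∀ k, ((-1 : ℂ) ^ k * (Nat.factorial k : ℂ) * (Nat.choose m k : ℂ) *
        (Nat.choose n k : ℂ) * (ρ : ℂ) ^ k * monoDeriv (m - k) (n - k) z 1 +
        Complex.I * ((-1 : ℂ) ^ k * (Nat.factorial k : ℂ) * (Nat.choose m k : ℂ) *
        (Nat.choose n k : ℂ) * (ρ : ℂ) ^ k * monoDeriv (m - k) (n - k) z Complex.I)) / 2
        = (-1 : ℂ) ^ k * (Nat.factorial k : ℂ) * (Nat.choose m k : ℂ) *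
          (Nat.choose n k : ℂ) * (ρ : ℂ) ^ k *
          (((n - k : ℕ) : ℂ) * z ^ (m - k) * (starRingEnd ℂ z) ^ (n - k - 1)) := by
      intro k
      rw [← monoDeriv_bar (m - k) (n - k) z]
      ring
    rw [Finset.sum_congr rfl (fun k _ => hterm k)]
    -- now the combinatorial identity
    rw [complexHermite, Finset.mul_sum]
    rw [← Finset.sum_subset (Finset.range_subset_range.2 (by omega :
        min m (n - 1) + 1 ≤ min m n + 1))]
    · refine Finset.sum_congr rfl fun k hk => ?_
      have h1 : (n - k - 1 : ℕ) = n - 1 - k := by omega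
      have h2 : (Nat.choose n k : ℂ) * ((n - k : ℕ) : ℂ)
          = (n : ℂ) * (Nat.choose (n - 1) k : ℂ) := by
        have := choose_nat_id n k hn
        exact_mod_cast this
      rw [h1]
      calc (-1 : ℂ) ^ k * (Nat.factorial k : ℂ) * (Nat.choose m k : ℂ) *
            (Nat.choose n k : ℂ) * (ρ : ℂ) ^ k *
            (((n - k : ℕ) : ℂ) * z ^ (m - k) * (starRingEnd ℂ z) ^ (n - 1 - k))
          = (-1 : ℂ) ^ k * (Nat.factorial k : ℂ) * (Nat.choose m k : ℂ) *
            ((Nat.choose n k : ℂ) * ((n - k : ℕ) : ℂ)) * (ρ : ℂ) ^ k *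
            (z ^ (m - k) * (starRingEnd ℂ z) ^ (n - 1 - k)) := by ring
        _ = _ := by rw [h2]; ring
    · intro k hk hk'
      simp only [Finset.mem_range] at hk hk'
      have h0 : n - k = 0 := by omega
      simp [h0]
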